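/- Fix a ∈ α with a = τ(a). For any r-component nanophrase p and i < j, writing k = ⟨g_{i,j,a}, p⟩, the identity ⟨2e_{i,j,a,a} + 2f_{i,j,a,a}, p⟩ = k(k−1) holds, so ⟨2e_{i,j,a,a} + 2f_{i,j,a,a} + g_{i,j,a}, p⟩ ≡ k² (mod 4); in particular this degree-2 formula mod 4 equals 1 if k is odd and 0 if k is even, recovering the mod-2 linking number entry l_{ija}(p). -/

import Mathlib

open List

attribute [local instance] Classical.propDecidable

/-- A symbol in a nanophrase: either a separator `none` or a letter occurrence
`some (x, a)` where `x` is the letter's name and `a` its label in `α`. -/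
abbrev NSym (α : Type) := Option (ℕ × α)

/-- A phrase: list of symbols; `none` separates components. -/
abbrev NPhrase (α : Type) := List (NSym α)

/-- The list of letter occurrences of a phrase. -/
def occs {α : Type} (p : NPhrase α) : List (ℕ × α) := p.filterMap id

/-- The set of (names of) letters appearing in a phrase. -/
def lettersOf {α : Type} (p : NPhrase α) : Finset ℕ := ((occs p).map Prod.fst).toFinset

/-- The rank: number of distinct letters. -/
def rank {α : Type} (p : NPhrase α) : ℕ := (lettersOf p).card

/-- A nanophrase: each letter appears exactly twice, with a consistent label. -/
def IsNano {α : Type} (p : NPhrase α) : Prop :=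
  (∀ x ∈ lettersOf p, ((occs p).map Prod.fst).count x = 2) ∧
  (∀ x a b, (x, a) ∈ occs p → (x, b) ∈ occs p → a = b)

/-- The number of components of a phrase. -/
def comps {α : Type} (p : NPhrase α) : ℕ := p.countP (fun s => s.isNone) + 1

/-- The subphrase with letter set restricted to `T`. -/
def restrict {α : Type} (p : NPhrase α) (T : Finset ℕ) : NPhrase α :=
  p.filter (fun s => match s with | none => true | some (x, _) => decide (x ∈ T))

/-- Isomorphism of (nano)phrases: a renaming of letters preserving labels. -/
def Iso {α : Type} (p q : NPhrase α) : Prop :=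
  ∃ σ : ℕ ≃ ℕ, p.map (Option.map (fun xa => (σ xa.1, xa.2))) = q

/-- Angle bracket: the number of subphrases of `p` isomorphic to `q`. -/
noncomputable def bracketN {α : Type} (q p : NPhrase α) : ℕ :=
  ((lettersOf p).powerset.filter (fun T => Iso (restrict p T) q)).card

/-- Homotopy moves for homotopy data `(α, τ, S)`. -/
inductive HMove {α : Type} (τ : α → α) (S : Set (α × α × α)) : NPhrase α → NPhrase α → Prop
  | h1 (x y : NPhrase α) (i : ℕ) (a : α) :
      HMove τ S (x ++ [some (i,a), some (i,a)] ++ y) (x ++ y)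
  | h2 (x y z : NPhrase α) (i j : ℕ) (a b : α) (h : a = τ b) :
      HMove τ S (x ++ [some (i,a), some (j,b)] ++ y ++ [some (j,b), some (i,a)] ++ z)
        (x ++ y ++ z)
  | h3 (x y z t : NPhrase α) (i j k : ℕ) (a b c : α) (h : (a,b,c) ∈ S) :
      HMove τ S
        (x ++ [some (i,a), some (j,b)] ++ y ++ [some (i,a), some (k,c)] ++ z
           ++ [some (j,b), some (k,c)] ++ t)
        (x ++ [some (j,b), some (i,a)] ++ y ++ [some (k,c), some (i,a)] ++ z
           ++ [some (k,c), some (j,b)] ++ t)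

/-- Homotopy: equivalence generated by isomorphism and the moves H1, H2, H3. -/
def Homotopic {α : Type} (τ : α → α) (S : Set (α × α × α)) : NPhrase α → NPhrase α → Prop :=
  Relation.EqvGen (fun p q => HMove τ S p q ∨ Iso p q)

/-- Build a phrase from a list of components. -/
def ofComponents {α : Type} (L : List (List (ℕ × α))) : NPhrase α :=
  ((L.map (fun c => c.map some)).intersperse [none]).flatten

/-- `g_{i,j,a}`: a single letter with one occurrence in component `i` and one in
component `j` (`i < j`), labeled `a`. -/
def gPat {α : Type} (r : ℕ) (i j : Fin r) (a : α) : NPhrase α :=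
  ofComponents (List.ofFn fun k : Fin r => if k = i ∨ k = j then [(0,a)] else [])

/-- `e_{i,j,a,b}`: component `i` is `AB` and component `j` is `AB`, `|A|=a`, `|B|=b`. -/
def ePat {α : Type} (r : ℕ) (i j : Fin r) (a b : α) : NPhrase α :=
  ofComponents (List.ofFn fun k : Fin r =>
    if k = i then [(0,a),(1,b)] else if k = j then [(0,a),(1,b)] else [])

/-- `f_{i,j,a,b}`: component `i` is `AB` and component `j` is `BA`, `|A|=a`, `|B|=b`. -/
def fPat {α : Type} (r : ℕ) (i j : Fin r) (a b : α) : NPhrase α :=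
  ofComponents (List.ofFn fun k : Fin r =>
    if k = i then [(0,a),(1,b)] else if k = j then [(1,b),(0,a)] else [])



namespace NanoAux

variable {α : Type}

/-- Split a phrase into its components (lists of letter occurrences). -/
def split : NPhrase α → List (List (ℕ × α))
  | [] => [[]]
  | none :: p => [] :: split p
  | some xa :: p => (xa :: (split p).headI) :: (split p).tail

@[simp] lemma split_nil : split ([] : NPhrase α) = [[]] := rfl
@[simp] lemma split_none (p : NPhrase α) : split (none :: p) = [] :: split p := rfl
@[simp] lemma split_some (xa : ℕ × α) (p : NPhrase α) :
    split (some xa :: p) = (xa :: (split p).headI) :: (split p).tail := rfl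

lemma split_ne_nil (p : NPhrase α) : split p ≠ [] := by
  induction p with
  | nil => simp
  | cons s p ih => cases s <;> simp

lemma headI_tail_split (p : NPhrase α) : (split p).headI :: (split p).tail = split p := by
  rcases h : split p with _ | ⟨c, cs⟩
  · exact absurd h (split_ne_nil p)
  · simp

lemma length_split (p : NPhrase α) : (split p).length = comps p := by
  induction p with
  | nil => simp [comps]
  | cons s p ih =>
    cases s with
    | none => simp [comps, List.countP_cons] at *; omega
    | some xa =>
      have h := split_ne_nil p
      have h2 : (split p).length ≠ 0 := by simpa using h
      simp [comps, List.countP_cons, List.length_tail] at *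
      omega

lemma ofComponents_cons (c : List (ℕ × α)) (L : List (List (ℕ × α))) (hL : L ≠ []) :
    ofComponents (c :: L) = c.map some ++ none :: ofComponents L := by
  rcases L with _ | ⟨c', L⟩
  · exact absurd rfl hL
  · simp [ofComponents, List.intersperse]

@[simp] lemma ofComponents_singleton (c : List (ℕ × α)) :
    ofComponents [c] = c.map some := by
  simp [ofComponents]

lemma ofComponents_split (p : NPhrase α) : ofComponents (split p) = p := by
  induction p with
  | nil => simp
  | cons s p ih =>
    cases s with
    | none =>
      rw [split_none, ofComponents_cons _ _ (split_ne_nil p), ih]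
      simp
    | some xa =>
      rw [split_some]
      rcases h : split p with _ | ⟨c, cs⟩
      · exact absurd h (split_ne_nil p)
      · rcases cs with _ | ⟨c', cs⟩
        · simp only [h, List.headI, List.tail]
          rw [ofComponents_singleton]
          have := ih; rw [h, ofComponents_singleton] at this
          simp [this]
        · simp only [h, List.headI, List.tail]
          rw [ofComponents_cons _ _ (by simp), List.map_cons]
          have := ih; rw [h, ofComponents_cons _ _ (by simp)] at this
          simp [this]

lemma split_map_some_append (c : List (ℕ × α)) (p : NPhrase α) :
    split (c.map some ++ p) = (c ++ (split p).headI) :: (split p).tail := by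
  induction c with
  | nil => simpa using (headI_tail_split p).symm
  | cons xa c ih => simp [ih]

lemma split_ofComponents (L : List (List (ℕ × α))) (hL : L ≠ []) :
    split (ofComponents L) = L := by
  induction L with
  | nil => exact absurd rfl hL
  | cons c L ih =>
    rcases L with _ | ⟨c', L⟩
    · simpa using split_map_some_append c []
    · rw [ofComponents_cons _ _ (by simp), split_map_some_append, split_none,
        ih (by simp)]
      simp

lemma split_filter (q : NSym α → Bool) (hq : q none = true) (p : NPhrase α) :
    split (p.filter q) = (split p).map (fun c => c.filter (fun xa => q (some xa))) := by
  induction p with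
  | nil => simp
  | cons s p ih =>
    cases s with
    | none => simp [List.filter_cons, hq, ih]
    | some xa =>
      rcases h : split p with _ | ⟨c, cs⟩
      · exact absurd h (split_ne_nil p)
      · rw [h] at ih
        by_cases hx : q (some xa) = true
        · simp [List.filter_cons, hx, ih, h]
        · simp only [Bool.not_eq_true] at hx
          simp [List.filter_cons, hx, ih, h]

lemma split_map (g : ℕ × α → ℕ × α) (p : NPhrase α) :
    split (p.map (Option.map g)) = (split p).map (List.map g) := by
  induction p with
  | nil => simp
  | cons s p ih =>
    cases s with
    | none => simp [ih]
    | some xa =>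
      rcases h : split p with _ | ⟨c, cs⟩
      · exact absurd h (split_ne_nil p)
      · rw [h] at ih; simp [ih, h]

lemma occs_eq_flatten (p : NPhrase α) : occs p = (split p).flatten := by
  induction p with
  | nil => simp [occs]
  | cons s p ih =>
    cases s with
    | none => simpa [occs] using ih
    | some xa =>
      rcases h : split p with _ | ⟨c, cs⟩
      · exact absurd h (split_ne_nil p)
      · rw [h] at ih; simp [occs, h] at *; simp [ih]

lemma iso_iff_split (p q : NPhrase α) :
    Iso p q ↔ ∃ σ : ℕ ≃ ℕ, (split p).map (List.map (fun xa => (σ xa.1, xa.2))) = split q := by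
  constructor
  · rintro ⟨σ, rfl⟩
    exact ⟨σ, (split_map _ p).symm⟩
  · rintro ⟨σ, h⟩
    refine ⟨σ, ?_⟩
    have := congrArg ofComponents h
    rwa [← split_map, ofComponents_split, ofComponents_split] at this

lemma mem_lettersOf {p : NPhrase α} {x : ℕ} :
    x ∈ lettersOf p ↔ ∃ b, (x, b) ∈ occs p := by
  simp only [lettersOf, List.mem_toFinset, List.mem_map]
  constructor
  · rintro ⟨⟨y, b⟩, h, rfl⟩; exact ⟨b, h⟩
  · rintro ⟨b, h⟩; exact ⟨(x, b), h, rfl⟩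

lemma occs_restrict (p : NPhrase α) (T : Finset ℕ) :
    occs (restrict p T) = (occs p).filter (fun xa => decide (xa.1 ∈ T)) := by
  induction p with
  | nil => rfl
  | cons s p ih =>
    cases s with
    | none => simpa [restrict, occs, List.filter_cons] using ih
    | some xa =>
      obtain ⟨x, b⟩ := xa
      by_cases hx : x ∈ T
      · simpa [restrict, occs, List.filter_cons, hx] using ih
      · simpa [restrict, occs, List.filter_cons, hx] using ih

lemma lettersOf_restrict {p : NPhrase α} {T : Finset ℕ} (h : T ⊆ lettersOf p) :
    lettersOf (restrict p T) = T := by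
  ext x
  simp only [mem_lettersOf, occs_restrict, List.mem_filter, decide_eq_true_eq]
  constructor
  · rintro ⟨b, _, hx⟩; exact hx
  · intro hx
    obtain ⟨b, hb⟩ := mem_lettersOf.mp (h hx)
    exact ⟨b, hb, hx⟩

lemma occs_map (g : ℕ × α → ℕ × α) (p : NPhrase α) :
    occs (p.map (Option.map g)) = (occs p).map g := by
  induction p with
  | nil => rfl
  | cons s p ih => cases s <;> simpa [occs] using ih

lemma card_lettersOf_iso {p q : NPhrase α} (h : Iso p q) :
    (lettersOf q).card = (lettersOf p).card := by
  obtain ⟨σ, rfl⟩ := h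
  have he : lettersOf (p.map (Option.map (fun xa : ℕ × α => (σ xa.1, xa.2))))
      = (lettersOf p).image σ := by
    ext x
    simp only [mem_lettersOf, occs_map, List.mem_map, Finset.mem_image]
    constructor
    · rintro ⟨b, ⟨u, hu, hux⟩⟩
      exact ⟨u.1, ⟨u.2, by simpa using hu⟩, by simpa using congrArg Prod.fst hux⟩
    · rintro ⟨y, ⟨b, hb⟩, rfl⟩
      exact ⟨b, (y, b), hb, rfl⟩
  rw [he, Finset.card_image_of_injective _ σ.injective]

section Patterns

variable {r : ℕ} (i j : Fin r) (a : α)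

lemma split_gPat :
    split (gPat r i j a)
      = List.ofFn (fun k : Fin r => if k = i ∨ k = j then [(0, a)] else []) := by
  apply split_ofComponents
  simp [List.ofFn_eq_nil_iff, i.pos.ne']

lemma split_ePat :
    split (ePat r i j a a)
      = List.ofFn (fun k : Fin r =>
          if k = i then [(0,a),(1,a)] else if k = j then [(0,a),(1,a)] else []) := by
  apply split_ofComponents
  simp [List.ofFn_eq_nil_iff, i.pos.ne']

lemma split_fPat :
    split (fPat r i j a a)
      = List.ofFn (fun k : Fin r =>
          if k = i then [(0,a),(1,a)] else if k = j then [(1,a),(0,a)] else []) := by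
  apply split_ofComponents
  simp [List.ofFn_eq_nil_iff, i.pos.ne']

lemma lettersOf_gPat : lettersOf (gPat r i j a) = {0} := by
  ext x
  simp only [mem_lettersOf, occs_eq_flatten, split_gPat, List.mem_flatten,
    Finset.mem_singleton]
  constructor
  · rintro ⟨b, l, hl, hmem⟩
    obtain ⟨k, rfl⟩ := List.mem_ofFn.mp hl
    split_ifs at hmem <;> simp at hmem
    exact hmem.1
  · rintro rfl
    refine ⟨a, [(0, a)], List.mem_ofFn.mpr ⟨i, by simp⟩, by simp⟩

lemma lettersOf_ePat : lettersOf (ePat r i j a a) = {0, 1} := by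
  ext x
  simp only [mem_lettersOf, occs_eq_flatten, split_ePat, List.mem_flatten,
    Finset.mem_insert, Finset.mem_singleton]
  constructor
  · rintro ⟨b, l, hl, hmem⟩
    obtain ⟨k, rfl⟩ := List.mem_ofFn.mp hl
    split_ifs at hmem <;> simp at hmem <;> tauto
  · rintro (rfl | rfl)
    · exact ⟨a, [(0,a),(1,a)], List.mem_ofFn.mpr ⟨i, by simp⟩, by simp⟩
    · exact ⟨a, [(0,a),(1,a)], List.mem_ofFn.mpr ⟨i, by simp⟩, by simp⟩

lemma lettersOf_fPat (hij : i ≠ j) : lettersOf (fPat r i j a a) = {0, 1} := by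
  ext x
  simp only [mem_lettersOf, occs_eq_flatten, split_fPat, List.mem_flatten,
    Finset.mem_insert, Finset.mem_singleton]
  constructor
  · rintro ⟨b, l, hl, hmem⟩
    obtain ⟨k, rfl⟩ := List.mem_ofFn.mp hl
    split_ifs at hmem <;> simp at hmem <;> tauto
  · rintro (rfl | rfl)
    · exact ⟨a, [(0,a),(1,a)], List.mem_ofFn.mpr ⟨i, by simp⟩, by simp⟩
    · exact ⟨a, [(1,a),(0,a)], List.mem_ofFn.mpr ⟨j, by simp [hij.symm]⟩, by simp⟩

end Patterns

section Helpers

lemma filter_or_of_left_nil {β : Type*} {P : β → Bool} (Q : β → Bool) {l : List β}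
    (h : l.filter P = []) : l.filter (fun b => P b || Q b) = l.filter Q := by
  induction l with
  | nil => rfl
  | cons u t ih =>
    by_cases hP : P u
    · simp [List.filter_cons, hP] at h
    · simp only [Bool.not_eq_true] at hP
      rw [List.filter_cons] at h
      simp only [hP] at h
      rw [List.filter_cons, List.filter_cons]
      simp only [hP, Bool.false_or]
      cases hQ : Q u <;> simp [ih h]

lemma filter_or_of_right_nil {β : Type*} (P : β → Bool) {Q : β → Bool} {l : List β}
    (h : l.filter Q = []) : l.filter (fun b => P b || Q b) = l.filter P := by
  have : (fun b => P b || Q b) = (fun b => Q b || P b) := by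
    funext b; exact Bool.or_comm _ _
  rw [this, filter_or_of_left_nil P h]

lemma filter_single_eq_left {l : List (ℕ × α)} (x y : ℕ) :
    l.filter (fun xa => decide (xa.1 = x))
      = (l.filter (fun xa => decide (xa.1 = x ∨ xa.1 = y))).filter
          (fun xa => decide (xa.1 = x)) := by
  rw [List.filter_filter]
  apply List.filter_congr
  intro xa _
  by_cases h : xa.1 = x <;> simp [h]

lemma filter_single_eq_right {l : List (ℕ × α)} (x y : ℕ) :
    l.filter (fun xa => decide (xa.1 = y))
      = (l.filter (fun xa => decide (xa.1 = x ∨ xa.1 = y))).filter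
          (fun xa => decide (xa.1 = y)) := by
  rw [List.filter_filter]
  apply List.filter_congr
  intro xa _
  by_cases h : xa.1 = y <;> simp [h]

lemma pair_filter_eq {a : α} {l : List (ℕ × α)} {x y : ℕ} (hxy : x ≠ y)
    (hx : l.filter (fun xa => decide (xa.1 = x)) = [(x, a)])
    (hy : l.filter (fun xa => decide (xa.1 = y)) = [(y, a)]) :
    l.filter (fun xa => decide (xa.1 = x ∨ xa.1 = y)) = [(x, a), (y, a)]
      ∨ l.filter (fun xa => decide (xa.1 = x ∨ xa.1 = y)) = [(y, a), (x, a)] := by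
  have hor : (fun xa : ℕ × α => decide (xa.1 = x ∨ xa.1 = y))
      = fun xa : ℕ × α => (decide (xa.1 = x) || decide (xa.1 = y)) := by
    funext xa; simp
  induction l with
  | nil => simp at hx
  | cons u t ih =>
    by_cases hux : u.1 = x
    · rw [List.filter_cons_of_pos (by simp [hux])] at hx
      rw [List.filter_cons_of_neg (by simp [hux, hxy])] at hy
      have hu : u = (x, a) := by
        have := List.head_eq_of_cons_eq hx; simpa using this
      have htx : t.filter (fun xa => decide (xa.1 = x)) = [] :=
        List.tail_eq_of_cons_eq hx
      have hpt : t.filter (fun xa => decide (xa.1 = x ∨ xa.1 = y))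
          = t.filter (fun xa => decide (xa.1 = y)) := by
        rw [hor]; exact filter_or_of_left_nil _ htx
      left
      rw [List.filter_cons_of_pos (by simp [hux]), hu, hpt, hy]
    · by_cases huy : u.1 = y
      · rw [List.filter_cons_of_pos (by simp [huy])] at hy
        rw [List.filter_cons_of_neg (by simp [hux])] at hx
        have hu : u = (y, a) := by
          have := List.head_eq_of_cons_eq hy; simpa using this
        have hty : t.filter (fun xa => decide (xa.1 = y)) = [] :=
          List.tail_eq_of_cons_eq hy
        have hpt : t.filter (fun xa => decide (xa.1 = x ∨ xa.1 = y))
            = t.filter (fun xa => decide (xa.1 = x)) := by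
          rw [hor]; exact filter_or_of_right_nil _ hty
        right
        rw [List.filter_cons_of_pos (by simp [huy]), hu, hpt, hx]
      · rw [List.filter_cons_of_neg (by simp [hux])] at hx
        rw [List.filter_cons_of_neg (by simp [huy])] at hy
        rw [List.filter_cons_of_neg (by simp [hux, huy])]
        exact ih hx hy

end Helpers

lemma exists_equiv_pair {x y : ℕ} (hxy : x ≠ y) :
    ∃ σ : ℕ ≃ ℕ, σ x = 0 ∧ σ y = 1 := by
  have hc : (Equiv.swap x 0) y ≠ 0 := by
    by_cases hy0 : y = 0
    · subst hy0
      rw [Equiv.swap_apply_right]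
      exact hxy
    · rw [Equiv.swap_apply_of_ne_of_ne (Ne.symm hxy) hy0]
      exact hy0
  refine ⟨(Equiv.swap x 0).trans (Equiv.swap ((Equiv.swap x 0) y) 1), ?_, ?_⟩
  · rw [Equiv.trans_apply, Equiv.swap_apply_left]
    exact Equiv.swap_apply_of_ne_of_ne (Ne.symm hc) (by norm_num)
  · rw [Equiv.trans_apply, Equiv.swap_apply_left]

lemma singles_of_pair_map {a : α} {l : List (ℕ × α)} {x y : ℕ} (hxy : x ≠ y)
    (σ : ℕ ≃ ℕ) {n0 n1 : ℕ} (hn : n0 ≠ n1)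
    (h : (l.filter (fun xa => decide (xa.1 = x ∨ xa.1 = y))).map
        (fun xa => (σ xa.1, xa.2)) = [(n0, a), (n1, a)]) :
    l.filter (fun xa => decide (xa.1 = x)) = [(x, a)]
      ∧ l.filter (fun xa => decide (xa.1 = y)) = [(y, a)] := by
  set F := l.filter (fun xa => decide (xa.1 = x ∨ xa.1 = y)) with hF
  have hlen : F.length = 2 := by
    have := congrArg List.length h; simpa using this
  obtain ⟨u, v, huv⟩ := List.length_eq_two.mp hlen
  rw [huv] at h
  simp only [List.map_cons, List.map_nil, List.cons.injEq, Prod.mk.injEq] at h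
  obtain ⟨⟨h1, h2⟩, ⟨h3, h4⟩, -⟩ := h
  have hu : u.1 = x ∨ u.1 = y := by
    have : u ∈ F := by rw [huv]; simp
    simpa using (List.mem_filter.mp this).2
  have hv : v.1 = x ∨ v.1 = y := by
    have : v ∈ F := by rw [huv]; simp
    simpa using (List.mem_filter.mp this).2
  have hne : u.1 ≠ v.1 := by
    intro hh
    exact hn (by rw [← h1, ← h3, hh])
  rw [filter_single_eq_left x y, filter_single_eq_right x y, ← hF, huv]
  rcases hu with hux | huy
  · have hvy : v.1 = y := by
      rcases hv with hvx | hvy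
      · exact absurd (hux.trans hvx.symm) hne
      · exact hvy
    have hu2 : u = (x, a) := by
      obtain ⟨u1, u2⟩ := u; simp at hux h2; simp [hux, h2]
    have hv2 : v = (y, a) := by
      obtain ⟨v1, v2⟩ := v; simp at hvy h4; simp [hvy, h4]
    subst hu2; subst hv2
    constructor
    · simp [List.filter_cons, hxy, Ne.symm hxy]
    · simp [List.filter_cons, hxy, Ne.symm hxy]
  · have hvx : v.1 = x := by
      rcases hv with hvx | hvy
      · exact hvx
      · exact absurd (huy.trans hvy.symm) hne
    have hu2 : u = (y, a) := by
      obtain ⟨u1, u2⟩ := u; simp at huy h2; simp [huy, h2]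
    have hv2 : v = (x, a) := by
      obtain ⟨v1, v2⟩ := v; simp at hvx h4; simp [hvx, h4]
    subst hu2; subst hv2
    constructor
    · simp [List.filter_cons, hxy, Ne.symm hxy]
    · simp [List.filter_cons, hxy, Ne.symm hxy]

lemma singles_of_pair_nil {l : List (ℕ × α)} {x y : ℕ}
    (h : l.filter (fun xa => decide (xa.1 = x ∨ xa.1 = y)) = []) :
    l.filter (fun xa => decide (xa.1 = x)) = []
      ∧ l.filter (fun xa => decide (xa.1 = y)) = [] := by
  constructor
  · rw [filter_single_eq_left x y, h]; rfl
  · rw [filter_single_eq_right x y, h]; rfl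

section Char

variable {r : ℕ} {p : NPhrase α} {d : Fin r → List (ℕ × α)}

lemma iso_restrict_iff (hd : split p = List.ofFn d) (T : Finset ℕ)
    (f : Fin r → List (ℕ × α)) (hr : r ≠ 0) :
    Iso (restrict p T) (ofComponents (List.ofFn f)) ↔
      ∃ σ : ℕ ≃ ℕ, ∀ k,
        ((d k).filter (fun xa => decide (xa.1 ∈ T))).map (fun xa => (σ xa.1, xa.2)) = f k := by
  rw [iso_iff_split, split_ofComponents _ (by simp [List.ofFn_eq_nil_iff, hr])]
  unfold restrict
  rw [split_filter _ rfl, hd]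
  have hpred : (fun xa : ℕ × α =>
      ((fun s : NSym α => match s with
        | none => true
        | some (x, _) => decide (x ∈ T)) (some xa)))
      = fun xa : ℕ × α => decide (xa.1 ∈ T) := by
    funext ⟨x, b⟩; rfl
  rw [hpred]
  simp only [List.map_ofFn, List.ofFn_inj, funext_iff, Function.comp_apply, Function.comp]

/-- `x` is a `g`-letter: it occurs once in components `i` and `j` with label `a`,
and nowhere else. -/
def GP (d : Fin r → List (ℕ × α)) (i j : Fin r) (a : α) (x : ℕ) : Prop :=
  ∀ k : Fin r, (d k).filter (fun xa => decide (xa.1 = x))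
    = if k = i ∨ k = j then [(x, a)] else []

lemma iso_g_iff (hd : split p = List.ofFn d) (i j : Fin r) (a : α) (x : ℕ) :
    Iso (restrict p {x}) (gPat r i j a) ↔ GP d i j a x := by
  unfold gPat
  rw [iso_restrict_iff hd _ _ i.pos.ne']
  have hp1 : (fun xa : ℕ × α => decide (xa.1 ∈ ({x} : Finset ℕ)))
      = fun xa : ℕ × α => decide (xa.1 = x) := by funext xa; simp
  rw [hp1]
  constructor
  · rintro ⟨σ, h⟩ k
    have hk := h k
    by_cases hcase : k = i ∨ k = j
    · rw [if_pos hcase] at hk ⊢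
      have hlen : ((d k).filter (fun xa => decide (xa.1 = x))).length = 1 := by
        have := congrArg List.length hk; simpa using this
      obtain ⟨u, hu⟩ := List.length_eq_one_iff.mp hlen
      rw [hu] at hk
      simp only [List.map_cons, List.map_nil, List.cons.injEq, Prod.mk.injEq] at hk
      have hux : u.1 = x := by
        have : u ∈ (d k).filter (fun xa => decide (xa.1 = x)) := by rw [hu]; simp
        simpa using (List.mem_filter.mp this).2
      have hu2 : u = (x, a) := by
        obtain ⟨u1, u2⟩ := u
        have h2 : u2 = a := hk.1.2
        simp only at hux
        simp [hux, h2]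
      rw [hu, hu2]
    · rw [if_neg hcase] at hk ⊢
      simpa using hk
  · intro h
    refine ⟨Equiv.swap x 0, fun k => ?_⟩
    rw [h k]
    by_cases hcase : k = i ∨ k = j
    · rw [if_pos hcase, if_pos hcase]
      simp [Equiv.swap_apply_left]
    · rw [if_neg hcase, if_neg hcase]
      rfl

lemma pair_pred_eq (x y : ℕ) :
    (fun xa : ℕ × α => decide (xa.1 ∈ ({x, y} : Finset ℕ)))
      = fun xa : ℕ × α => decide (xa.1 = x ∨ xa.1 = y) := by
  funext xa; simp

lemma iso_pair_iff (hd : split p = List.ofFn d) {i j : Fin r} (hij : i ≠ j) (a : α)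
    {x y : ℕ} (hxy : x ≠ y) :
    (Iso (restrict p {x, y}) (ePat r i j a a) ∨ Iso (restrict p {x, y}) (fPat r i j a a))
      ↔ (GP d i j a x ∧ GP d i j a y) := by
  unfold ePat fPat
  rw [iso_restrict_iff hd _ _ i.pos.ne', iso_restrict_iff hd _ _ i.pos.ne', pair_pred_eq]
  constructor
  · rintro (⟨σ, h⟩ | ⟨σ, h⟩)
    · have key : ∀ k : Fin r,
          (d k).filter (fun xa => decide (xa.1 = x)) = (if k = i ∨ k = j then [(x,a)] else [])
          ∧ (d k).filter (fun xa => decide (xa.1 = y)) = (if k = i ∨ k = j then [(y,a)] else []) := by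
        intro k
        have hk := h k
        by_cases hki : k = i
        · subst hki
          rw [if_pos rfl] at hk
          have hs := singles_of_pair_map hxy σ (by norm_num : (0:ℕ) ≠ 1) hk
          simp [hs.1, hs.2]
        · by_cases hkj : k = j
          · subst hkj
            rw [if_neg (fun hh => hij hh.symm), if_pos rfl] at hk
            have hs := singles_of_pair_map hxy σ (by norm_num : (0:ℕ) ≠ 1) hk
            simp [hs.1, hs.2]
          · rw [if_neg hki, if_neg hkj] at hk
            have hnil : (d k).filter (fun xa => decide (xa.1 = x ∨ xa.1 = y)) = [] := by
              simpa using hk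
            have hs := singles_of_pair_nil hnil
            simp [hs.1, hs.2, hki, hkj]
      exact ⟨fun k => (key k).1, fun k => (key k).2⟩
    · have key : ∀ k : Fin r,
          (d k).filter (fun xa => decide (xa.1 = x)) = (if k = i ∨ k = j then [(x,a)] else [])
          ∧ (d k).filter (fun xa => decide (xa.1 = y)) = (if k = i ∨ k = j then [(y,a)] else []) := by
        intro k
        have hk := h k
        by_cases hki : k = i
        · subst hki
          rw [if_pos rfl] at hk
          have hs := singles_of_pair_map hxy σ (by norm_num : (0:ℕ) ≠ 1) hk
          simp [hs.1, hs.2]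
        · by_cases hkj : k = j
          · subst hkj
            rw [if_neg (fun hh => hij hh.symm), if_pos rfl] at hk
            have hs := singles_of_pair_map hxy σ (by norm_num : (1:ℕ) ≠ 0) hk
            simp [hs.1, hs.2]
          · rw [if_neg hki, if_neg hkj] at hk
            have hnil : (d k).filter (fun xa => decide (xa.1 = x ∨ xa.1 = y)) = [] := by
              simpa using hk
            have hs := singles_of_pair_nil hnil
            simp [hs.1, hs.2, hki, hkj]
      exact ⟨fun k => (key k).1, fun k => (key k).2⟩
  · rintro ⟨hx, hy⟩
    have hxi : (d i).filter (fun xa => decide (xa.1 = x)) = [(x,a)] := by simpa using hx i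
    have hyi : (d i).filter (fun xa => decide (xa.1 = y)) = [(y,a)] := by simpa using hy i
    have hxj : (d j).filter (fun xa => decide (xa.1 = x)) = [(x,a)] := by simpa using hx j
    have hyj : (d j).filter (fun xa => decide (xa.1 = y)) = [(y,a)] := by simpa using hy j
    have hFi := pair_filter_eq hxy hxi hyi
    have hFj := pair_filter_eq hxy hxj hyj
    have hnil : ∀ k, k ≠ i → k ≠ j →
        (d k).filter (fun xa => decide (xa.1 = x ∨ xa.1 = y)) = [] := by
      intro k hki hkj
      have h1 : (d k).filter (fun xa => decide (xa.1 = x)) = [] := by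
        simpa [hki, hkj] using hx k
      have h2 : (d k).filter (fun xa => decide (xa.1 = y)) = [] := by
        simpa [hki, hkj] using hy k
      have hor : (fun xa : ℕ × α => decide (xa.1 = x ∨ xa.1 = y))
          = fun xa : ℕ × α => (decide (xa.1 = x) || decide (xa.1 = y)) := by
        funext xa; simp
      rw [hor, filter_or_of_left_nil _ h1]
      exact h2
    obtain ⟨σ, hσx, hσy⟩ := exists_equiv_pair hxy
    obtain ⟨σ', hσ'y, hσ'x⟩ := exists_equiv_pair (Ne.symm hxy)
    rcases hFi with hFi | hFi <;> rcases hFj with hFj | hFj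
    · left
      refine ⟨σ, fun k => ?_⟩
      by_cases hki : k = i
      · subst hki; rw [if_pos rfl, hFi]; simp [hσx, hσy]
      · by_cases hkj : k = j
        · subst hkj
          rw [if_neg (fun hh => hij hh.symm), if_pos rfl, hFj]
          simp [hσx, hσy]
        · rw [if_neg hki, if_neg hkj, hnil k hki hkj]; rfl
    · right
      refine ⟨σ, fun k => ?_⟩
      by_cases hki : k = i
      · subst hki; rw [if_pos rfl, hFi]; simp [hσx, hσy]
      · by_cases hkj : k = j
        · subst hkj
          rw [if_neg (fun hh => hij hh.symm), if_pos rfl, hFj]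
          simp [hσx, hσy]
        · rw [if_neg hki, if_neg hkj, hnil k hki hkj]; rfl
    · right
      refine ⟨σ', fun k => ?_⟩
      by_cases hki : k = i
      · subst hki; rw [if_pos rfl, hFi]; simp [hσ'x, hσ'y]
      · by_cases hkj : k = j
        · subst hkj
          rw [if_neg (fun hh => hij hh.symm), if_pos rfl, hFj]
          simp [hσ'x, hσ'y]
        · rw [if_neg hki, if_neg hkj, hnil k hki hkj]; rfl
    · left
      refine ⟨σ', fun k => ?_⟩
      by_cases hki : k = i
      · subst hki; rw [if_pos rfl, hFi]; simp [hσ'x, hσ'y]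
      · by_cases hkj : k = j
        · subst hkj
          rw [if_neg (fun hh => hij hh.symm), if_pos rfl, hFj]
          simp [hσ'x, hσ'y]
        · rw [if_neg hki, if_neg hkj, hnil k hki hkj]; rfl

lemma not_iso_e_and_f (hd : split p = List.ofFn d) {i j : Fin r} (hij : i ≠ j)
    (a : α) (T : Finset ℕ) :
    ¬(Iso (restrict p T) (ePat r i j a a) ∧ Iso (restrict p T) (fPat r i j a a)) := by
  rintro ⟨he, hf⟩
  unfold ePat at he
  unfold fPat at hf
  rw [iso_restrict_iff hd _ _ i.pos.ne'] at he hf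
  obtain ⟨σ, hσ⟩ := he
  obtain ⟨σ', hσ'⟩ := hf
  have hei := hσ i; rw [if_pos rfl] at hei
  have hej := hσ j; rw [if_neg (fun hh => hij hh.symm), if_pos rfl] at hej
  have hfi := hσ' i; rw [if_pos rfl] at hfi
  have hfj := hσ' j; rw [if_neg (fun hh => hij hh.symm), if_pos rfl] at hfj
  obtain ⟨u, v, huv⟩ := List.length_eq_two.mp
    (by have := congrArg List.length hei; simpa using this)
  obtain ⟨u', v', huv'⟩ := List.length_eq_two.mp
    (by have := congrArg List.length hej; simpa using this)
  rw [huv] at hei hfi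
  rw [huv'] at hej hfj
  simp only [List.map_cons, List.map_nil, List.cons.injEq, Prod.mk.injEq] at hei hej hfi hfj
  have h1 : u'.1 = u.1 := σ.injective (by rw [hej.1.1, hei.1.1])
  have h2 : σ' u'.1 = 1 := hfj.1.1
  rw [h1, hfi.1.1] at h2
  exact absurd h2 (by norm_num)

end Char

end NanoAux

/-- fix an involution τ and `a ∈ α` with `a = τ(a)`.  For an
`r`-component nanophrase `p` and components `i < j`, writing
`k = ⟨g_{i,j,a}, p⟩`, one has `⟨2e_{i,j,a,a} + 2f_{i,j,a,a}, p⟩ = k(k−1)`, hence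
`⟨2e + 2f + g, p⟩ ≡ k² (mod 4)`; in particular this degree-2 formula mod 4 equals
1 if `k` is odd and 0 if `k` is even, recovering the mod-2 linking number entry
`l_{ija}(p) = k mod 2`. -/
theorem degree_two_formula_mod_four {α : Type}
    (τ : α → α) (hτ : Function.Involutive τ) (a : α) (ha : a = τ a)
    (r : ℕ) (i j : Fin r) (hij : i < j)
    (p : NPhrase α) (hp : IsNano p) (hpr : comps p = r) :
    (letI k := bracketN (gPat r i j a) p
     2 * (bracketN (ePat r i j a a) p + bracketN (fPat r i j a a) p) = k * (k - 1) ∧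
     ((2 * bracketN (ePat r i j a a) p + 2 * bracketN (fPat r i j a a) p + k : ℕ) : ZMod 4)
        = (k : ZMod 4) ^ 2 ∧
     ((2 * bracketN (ePat r i j a a) p + 2 * bracketN (fPat r i j a a) p + k : ℕ) : ZMod 4)
        = if k % 2 = 1 then 1 else 0) := by
  have hlen : (NanoAux.split p).length = r := by rw [NanoAux.length_split, hpr]
  set d : Fin r → List (ℕ × α) := fun k => (NanoAux.split p).get (Fin.cast hlen.symm k) with hdDef
  have hd : NanoAux.split p = List.ofFn d := by
    apply List.ext_get (by simp [hlen])
    intro n h1 h2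
    simp [hdDef, List.get_ofFn, Fin.cast]
  have hij' : i ≠ j := Fin.ne_of_lt hij
  set G : Finset ℕ :=
    (lettersOf p).filter (fun x => Iso (restrict p {x}) (gPat r i j a)) with hG
  have hkey1 : (lettersOf p).powerset.filter (fun T => Iso (restrict p T) (gPat r i j a))
      = G.powersetCard 1 := by
    ext T
    simp only [Finset.mem_filter, Finset.mem_powerset, Finset.mem_powersetCard]
    constructor
    · rintro ⟨hsub, hiso⟩
      have hcard : T.card = 1 := by
        have h1 := NanoAux.card_lettersOf_iso hiso
        rw [NanoAux.lettersOf_restrict hsub, NanoAux.lettersOf_gPat] at h1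
        simpa using h1.symm
      obtain ⟨x, rfl⟩ := Finset.card_eq_one.mp hcard
      refine ⟨?_, hcard⟩
      rw [Finset.singleton_subset_iff, hG, Finset.mem_filter]
      exact ⟨hsub (Finset.mem_singleton_self x), hiso⟩
    · rintro ⟨hTG, hcard⟩
      obtain ⟨x, rfl⟩ := Finset.card_eq_one.mp hcard
      have hx := hTG (Finset.mem_singleton_self x)
      rw [hG, Finset.mem_filter] at hx
      exact ⟨Finset.singleton_subset_iff.mpr hx.1, hx.2⟩
  have hkey2 : (lettersOf p).powerset.filter (fun T => Iso (restrict p T) (ePat r i j a a))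
        ∪ (lettersOf p).powerset.filter (fun T => Iso (restrict p T) (fPat r i j a a))
      = G.powersetCard 2 := by
    ext T
    simp only [Finset.mem_union, Finset.mem_filter, Finset.mem_powerset,
      Finset.mem_powersetCard]
    constructor
    · rintro (⟨hsub, hiso⟩ | ⟨hsub, hiso⟩)
      · have hcard : T.card = 2 := by
          have h1 := NanoAux.card_lettersOf_iso hiso
          rw [NanoAux.lettersOf_restrict hsub, NanoAux.lettersOf_ePat] at h1
          simpa using h1.symm
        obtain ⟨x, y, hxy, rfl⟩ := Finset.card_eq_two.mp hcard
        have hGP := (NanoAux.iso_pair_iff hd hij' a hxy).mp (Or.inl hiso)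
        refine ⟨?_, hcard⟩
        intro z hz
        rw [Finset.mem_insert, Finset.mem_singleton] at hz
        rw [hG, Finset.mem_filter]
        rcases hz with rfl | rfl
        · exact ⟨hsub (by simp), (NanoAux.iso_g_iff hd i j a z).mpr hGP.1⟩
        · exact ⟨hsub (by simp), (NanoAux.iso_g_iff hd i j a z).mpr hGP.2⟩
      · have hcard : T.card = 2 := by
          have h1 := NanoAux.card_lettersOf_iso hiso
          rw [NanoAux.lettersOf_restrict hsub, NanoAux.lettersOf_fPat i j a hij'] at h1
          simpa using h1.symm
        obtain ⟨x, y, hxy, rfl⟩ := Finset.card_eq_two.mp hcard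
        have hGP := (NanoAux.iso_pair_iff hd hij' a hxy).mp (Or.inr hiso)
        refine ⟨?_, hcard⟩
        intro z hz
        rw [Finset.mem_insert, Finset.mem_singleton] at hz
        rw [hG, Finset.mem_filter]
        rcases hz with rfl | rfl
        · exact ⟨hsub (by simp), (NanoAux.iso_g_iff hd i j a z).mpr hGP.1⟩
        · exact ⟨hsub (by simp), (NanoAux.iso_g_iff hd i j a z).mpr hGP.2⟩
    · rintro ⟨hTG, hcard⟩
      obtain ⟨x, y, hxy, rfl⟩ := Finset.card_eq_two.mp hcard
      have hx := hTG (Finset.mem_insert_self x {y})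
      have hy := hTG (by rw [Finset.mem_insert]; exact Or.inr (Finset.mem_singleton_self y))
      rw [hG, Finset.mem_filter] at hx hy
      have hGP : NanoAux.GP d i j a x ∧ NanoAux.GP d i j a y :=
        ⟨(NanoAux.iso_g_iff hd i j a x).mp hx.2, (NanoAux.iso_g_iff hd i j a y).mp hy.2⟩
      have hsub : ({x, y} : Finset ℕ) ⊆ lettersOf p := by
        intro z hz
        rw [Finset.mem_insert, Finset.mem_singleton] at hz
        rcases hz with rfl | rfl
        exacts [hx.1, hy.1]
      rcases (NanoAux.iso_pair_iff hd hij' a hxy).mpr hGP with h | h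
      · exact Or.inl ⟨hsub, h⟩
      · exact Or.inr ⟨hsub, h⟩
  have hdisj :
      Disjoint
        ((lettersOf p).powerset.filter (fun T => Iso (restrict p T) (ePat r i j a a)))
        ((lettersOf p).powerset.filter (fun T => Iso (restrict p T) (fPat r i j a a))) := by
    rw [Finset.disjoint_left]
    intro T hT1 hT2
    rw [Finset.mem_filter] at hT1 hT2
    exact NanoAux.not_iso_e_and_f hd hij' a T ⟨hT1.2, hT2.2⟩
  have hkg : bracketN (gPat r i j a) p = G.card := by
    unfold bracketN
    rw [hkey1, Finset.card_powersetCard, Nat.choose_one_right]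
  have hef : bracketN (ePat r i j a a) p + bracketN (fPat r i j a a) p
      = G.card.choose 2 := by
    unfold bracketN
    rw [← Finset.card_union_of_disjoint hdisj, hkey2, Finset.card_powersetCard]
  have hdvd : 2 ∣ G.card * (G.card - 1) := by
    rcases Nat.even_or_odd G.card with he | ho
    · exact Dvd.dvd.mul_right he.two_dvd _
    · exact Dvd.dvd.mul_left (Nat.Odd.sub_odd ho odd_one).two_dvd _
  have part1 : 2 * (bracketN (ePat r i j a a) p + bracketN (fPat r i j a a) p)
      = bracketN (gPat r i j a) p * (bracketN (gPat r i j a) p - 1) := by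
    rw [hef, hkg, Nat.choose_two_right]
    exact Nat.mul_div_cancel' hdvd
  refine ⟨part1, ?_, ?_⟩
  · have harith : 2 * bracketN (ePat r i j a a) p + 2 * bracketN (fPat r i j a a) p
        + bracketN (gPat r i j a) p
        = bracketN (gPat r i j a) p * bracketN (gPat r i j a) p := by
      have h2 : 2 * bracketN (ePat r i j a a) p + 2 * bracketN (fPat r i j a a) p
          = bracketN (gPat r i j a) p * (bracketN (gPat r i j a) p - 1) := by
        rw [← part1]; ring
      rw [h2]
      rcases Nat.eq_zero_or_pos (bracketN (gPat r i j a) p) with h | h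
      · simp [h]
      · have h1 : bracketN (gPat r i j a) p - 1 + 1 = bracketN (gPat r i j a) p :=
          Nat.succ_pred_eq_of_pos h
        calc bracketN (gPat r i j a) p * (bracketN (gPat r i j a) p - 1)
              + bracketN (gPat r i j a) p
            = bracketN (gPat r i j a) p * (bracketN (gPat r i j a) p - 1 + 1) := by ring
          _ = bracketN (gPat r i j a) p * bracketN (gPat r i j a) p := by rw [h1]
    rw [harith]
    push_cast
    ring
  · have heq2 : ((2 * bracketN (ePat r i j a a) p + 2 * bracketN (fPat r i j a a) p
        + bracketN (gPat r i j a) p : ℕ) : ZMod 4)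
        = ((bracketN (gPat r i j a) p : ZMod 4)) ^ 2 := by
      have harith : 2 * bracketN (ePat r i j a a) p + 2 * bracketN (fPat r i j a a) p
          + bracketN (gPat r i j a) p
          = bracketN (gPat r i j a) p * bracketN (gPat r i j a) p := by
        have h2 : 2 * bracketN (ePat r i j a a) p + 2 * bracketN (fPat r i j a a) p
            = bracketN (gPat r i j a) p * (bracketN (gPat r i j a) p - 1) := by
          rw [← part1]; ring
        rw [h2]
        rcases Nat.eq_zero_or_pos (bracketN (gPat r i j a) p) with h | h
        · simp [h]
        · have h1 : bracketN (gPat r i j a) p - 1 + 1 = bracketN (gPat r i j a) p :=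
            Nat.succ_pred_eq_of_pos h
          calc bracketN (gPat r i j a) p * (bracketN (gPat r i j a) p - 1)
                + bracketN (gPat r i j a) p
              = bracketN (gPat r i j a) p * (bracketN (gPat r i j a) p - 1 + 1) := by ring
            _ = bracketN (gPat r i j a) p * bracketN (gPat r i j a) p := by rw [h1]
      rw [harith]
      push_cast
      ring
    rw [heq2]
    set n := bracketN (gPat r i j a) p
    have hcast : (n : ZMod 4) = ((n % 4 : ℕ) : ZMod 4) := (ZMod.natCast_mod n 4).symm
    have hmod2 : n % 2 = (n % 4) % 2 := by omega
    have h4 : n % 4 = 0 ∨ n % 4 = 1 ∨ n % 4 = 2 ∨ n % 4 = 3 := by omega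
    rcases h4 with h | h | h | h <;> rw [hcast, h, hmod2, h] <;> decide
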